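/- Let k be a field of characteristic p > 2, H = (Z/p)^s with s ≥ 1, acting on V^# = kX ⊕ kY with generators g_i fixing Y and sending X to X - μ_iY, where μ₁,…,μ_s are 𝔽_p-linearly independent. Then for every n with 0 ≤ n ≤ p^s - 1, the space of H-invariants in the n-th symmetric power S^n(V^#) is one-dimensional, spanned by Y^n. -/

import Mathlib

open MvPolynomial

/-- The `k`-algebra automorphism of `k[X,Y]` determined by `X ↦ X - cY`, `Y ↦ Y`
(we write `X = X 0`, `Y = X 1`). -/
noncomputable def substAct (k : Type*) [CommRing k] (c : k) :
    MvPolynomial (Fin 2) k →ₐ[k] MvPolynomial (Fin 2) k :=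
  aeval (fun j => if j = 0 then X 0 - C c * X 1 else X 1)

lemma substAct_substAct {k : Type*} [CommRing k] (a b : k) (f : MvPolynomial (Fin 2) k) :
    substAct k a (substAct k b f) = substAct k (a + b) f := by
  have : (substAct k a).comp (substAct k b) = substAct k (a + b) := by
    apply MvPolynomial.algHom_ext
    intro j
    fin_cases j <;> simp [substAct] <;> ring
  exact DFunLike.congr_fun this f

lemma substAct_zero {k : Type*} [CommRing k] (f : MvPolynomial (Fin 2) k) :
    substAct k 0 f = f := by
  have : substAct k (0:k) = AlgHom.id k _ := by
    apply MvPolynomial.algHom_ext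
    intro j
    fin_cases j <;> simp [substAct]
  rw [this]; rfl

-- Fin 2 Finsupp facts
lemma fin2_finsupp_eq {m m' : Fin 2 →₀ ℕ} (h0 : m 0 = m' 0) (h1 : m 1 = m' 1) : m = m' := by
  ext j; fin_cases j <;> assumption

lemma degree_fin2 {k : Type*} [CommRing k] {n : ℕ} {f : MvPolynomial (Fin 2) k}
    (hf : f.IsHomogeneous n) {m : Fin 2 →₀ ℕ} (hm : coeff m f ≠ 0) : m 0 + m 1 = n := by
  have h := hf hm
  rw [show (Finsupp.weight 1) m = Finsupp.degree m from
      (DFunLike.congr_fun Finsupp.degree_eq_weight_one m).symm, Finsupp.degree_apply,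
    Finset.sum_subset (Finset.subset_univ m.support)
      (fun i _ hi => Finsupp.notMem_support_iff.mp hi), Fin.sum_univ_two] at h
  exact h


/-- Let `k` be a field of characteristic `p > 2`, `H = (ℤ/p)^s` with `s ≥ 1`
acting on `V^# = kX ⊕ kY` with the `i`-th generator fixing `Y` and sending `X` to `X - μᵢY`,
where `μ₁, …, μ_s` are `𝔽_p`-linearly independent.  Then for every `0 ≤ n ≤ p^s - 1`, the
space of `H`-invariants in `Sⁿ(V^#)` (degree-`n` homogeneous polynomials) is one-dimensional,
spanned by `Yⁿ`. -/
theorem invariants_in_symmetric_powers (p : ℕ) [Fact p.Prime] (hp : Odd p)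
    (k : Type*) [Field k] [CharP k p] (s : ℕ) (hs : 1 ≤ s) (μ : Fin s → k)
    (hμ : ∀ c : Fin s → ZMod p,
      ∑ i, ZMod.castHom (dvd_refl p) k (c i) * μ i = 0 → c = 0)
    (n : ℕ) (hn : n ≤ p ^ s - 1)
    (f : MvPolynomial (Fin 2) k) (hf : f ∈ homogeneousSubmodule (Fin 2) k n) :
    (∀ i : Fin s, substAct k (μ i) f = f) ↔ ∃ c : k, f = c • (X 1) ^ n := by
  classical
  rw [mem_homogeneousSubmodule] at hf
  constructor
  · intro hinv
    -- the map c ↦ ∑ cast (c i) * μ i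
    set φ : (Fin s → ZMod p) → k := fun c => ∑ i, ZMod.castHom (dvd_refl p) k (c i) * μ i
      with hφ
    have hφadd : ∀ c c', φ (c - c') = φ c - φ c' := by
      intro c c'
      simp only [hφ, Pi.sub_apply, map_sub, sub_mul, Finset.sum_sub_distrib]
    have hφinj : Function.Injective φ := by
      intro c c' h
      have : φ (c - c') = 0 := by rw [hφadd, h, sub_self]
      have := hμ _ this
      ext i
      have := congrFun this i
      simpa [sub_eq_zero] using this
    -- invariance under substAct (φ c) for all c
    have hstep : ∀ (t : k), substAct k t f = f → ∀ (j : ℕ), substAct k ((j : k) * t) f = f := by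
      intro t ht j
      induction j with
      | zero => simpa using substAct_zero f
      | succ j ih =>
        push_cast
        rw [add_mul, one_mul, ← substAct_substAct, ht, ih]
    have hinv' : ∀ c : Fin s → ZMod p, substAct k (φ c) f = f := by
      intro c
      have : ∀ T : Finset (Fin s),
          substAct k (∑ i ∈ T, ZMod.castHom (dvd_refl p) k (c i) * μ i) f = f := by
        intro T
        induction T using Finset.induction with
        | empty => simpa using substAct_zero f
        | @insert a T hx ih =>
          rw [Finset.sum_insert hx, ← substAct_substAct, ih]
          have hcast : (ZMod.castHom (dvd_refl p) k (c a) : k) = (((c a).val : ℕ) : k) := by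
            simp [ZMod.natCast_val]
          rw [hcast]
          exact hstep _ (hinv a) _
      exact this Finset.univ
    -- evaluation consequences
    set vv : k → Fin 2 → k := fun t j => if j = 0 then t else 1 with hvv
    have heval : ∀ c : Fin s → ZMod p,
        aeval (vv (φ c)) f = aeval (vv 0) f := by
      intro c
      conv_lhs => rw [← hinv' c]
      rw [show (aeval (vv (φ c)) (substAct k (φ c) f))
          = ((aeval (vv (φ c))).comp (substAct k (φ c))) f from rfl]
      rw [substAct, comp_aeval]
      have hfun : (fun i : Fin 2 => aeval (vv (φ c)) (if i = 0 then X 0 - C (φ c) * X 1 else X 1))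
          = vv 0 := by
        funext j
        fin_cases j <;> simp [hvv]
      rw [hfun]
    -- the dehomogenization
    set P : Polynomial k :=
      aeval (fun j : Fin 2 => if j = 0 then (Polynomial.X : Polynomial k) else 1) f with hP
    have hPeval : ∀ t : k, Polynomial.aeval t P = aeval (vv t) f := by
      intro t
      rw [hP, show (Polynomial.aeval t (aeval
            (fun j : Fin 2 => if j = 0 then (Polynomial.X : Polynomial k) else 1) f))
          = ((Polynomial.aeval t).comp (aeval
            (fun j : Fin 2 => if j = 0 then (Polynomial.X : Polynomial k) else 1))) f from rfl,
        comp_aeval]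
      have hfun : (fun i : Fin 2 => Polynomial.aeval t
          ((if i = 0 then (Polynomial.X : Polynomial k) else 1))) = vv t := by
        funext j
        fin_cases j <;> simp [hvv]
      rw [hfun]
    have hPsum : P = ∑ m ∈ f.support, Polynomial.C (coeff m f) * Polynomial.X ^ (m 0) := by
      rw [hP]
      conv_lhs => rw [f.as_sum]
      rw [map_sum]
      refine Finset.sum_congr rfl fun m _ => ?_
      rw [aeval_monomial, Finsupp.prod_fintype _ _ (fun i => pow_zero _), Fin.prod_univ_two]
      simp [Polynomial.algebraMap_eq]
    have hPcoeff : ∀ j : ℕ, P.coeff j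
        = ∑ m ∈ f.support, if m 0 = j then coeff m f else 0 := by
      intro j
      rw [hPsum, Polynomial.finset_sum_coeff]
      refine Finset.sum_congr rfl fun m _ => ?_
      rw [Polynomial.coeff_C_mul, Polynomial.coeff_X_pow]
      by_cases h : m 0 = j
      · simp [h]
      · rw [if_neg h, if_neg (fun hh => h hh.symm), mul_zero]
    have hdegP : P.natDegree ≤ n := by
      refine Polynomial.natDegree_le_iff_coeff_eq_zero.2 fun N hN => ?_
      rw [hPcoeff]
      refine Finset.sum_eq_zero fun m hm => ?_
      have hmn := degree_fin2 hf (mem_support_iff.mp hm)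
      have : m 0 ≠ N := by omega
      simp [this]
    -- the key polynomial Q
    set c0 : k := aeval (vv 0) f with hc0
    have hQ : P - Polynomial.C c0 = 0 := by
      apply Polynomial.eq_zero_of_natDegree_lt_card_of_eval_eq_zero _ hφinj
      · intro c
        rw [Polynomial.eval_sub, Polynomial.eval_C, sub_eq_zero, ← Polynomial.coe_aeval_eq_eval]
        exact (hPeval (φ c)).trans (heval c)
      · have h1 : 0 < p ^ s := pow_pos (Fact.out : p.Prime).pos s
        have h2 : (P - Polynomial.C c0).natDegree ≤ n := by
          refine le_trans (Polynomial.natDegree_sub_le _ _) ?_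
          simpa using hdegP
        calc (P - Polynomial.C c0).natDegree ≤ n := h2
          _ < p ^ s := by omega
          _ = Fintype.card (Fin s → ZMod p) := by simp [ZMod.card]
    have hPC : P = Polynomial.C c0 := by rwa [sub_eq_zero] at hQ
    -- extract coefficients
    refine ⟨coeff (Finsupp.single 1 n) f, ?_⟩
    ext m
    rw [MvPolynomial.coeff_smul, X_pow_eq_monomial, coeff_monomial]
    by_cases hm : Finsupp.single 1 n = m
    · simp [← hm]
    · simp only [hm, if_false, smul_zero]
      by_contra hc
      have hmsup : m ∈ f.support := mem_support_iff.mpr hc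
      have hmn := degree_fin2 hf hc
      have hm0 : m 0 ≠ 0 := by
        intro h0
        apply hm
        apply fin2_finsupp_eq
        · simp [h0]
        · simp; omega
      have : P.coeff (m 0) = coeff m f := by
        rw [hPcoeff]
        rw [Finset.sum_eq_single m (fun m' hm' hne => ?_) (fun h => absurd hmsup h)]
        · simp
        · have hmn' := degree_fin2 hf (mem_support_iff.mp hm')
          have : m' 0 ≠ m 0 := by
            intro he
            exact hne (fin2_finsupp_eq he (by omega))
          simp [this]
      rw [hPC, Polynomial.coeff_C, if_neg hm0] at this
      exact hc this.symm
  · rintro ⟨c, rfl⟩ i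
    rw [map_smul, map_pow]
    congr 2
    simp [substAct]
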